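/- Let m > 0 and t > 0 be real numbers, let q be an even positive integer, and let D_1, …, D_q be mutually independent positive real-valued random variables such that for every real x > 0 and every j, the probability that D_j ≤ x is at most x/m. Then the probability that D_1 + ⋯ + D_q ≤ t is at most (q choose q/2) · (2t/(qm))^{q/2}, which is at most (4et/(qm))^{q/2}. -/

import Mathlib

open MeasureTheory

/-- If `D 1, …, D q` are mutually independent positive random variables with
`Pr[D j ≤ x] ≤ x/m` for every `x > 0`, then for even `q`,
`Pr[∑ j, D j ≤ t] ≤ (q choose q/2) * (2t/(qm))^(q/2) ≤ (4et/(qm))^(q/2)`. -/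
theorem prob_sum_small_of_indep_durations
    {Ω : Type*} [MeasurableSpace Ω] (μ : Measure Ω) [IsProbabilityMeasure μ]
    (m t : ℝ) (hm : 0 < m) (ht : 0 < t)
    (q : ℕ) (hq : 0 < q) (hqe : Even q)
    (D : Fin q → Ω → ℝ) (hmeas : ∀ j, Measurable (D j))
    (hindep : ProbabilityTheory.iIndepFun D μ)
    (hpos : ∀ j ω, 0 < D j ω)
    (hcdf : ∀ x : ℝ, 0 < x → ∀ j, μ {ω : Ω | D j ω ≤ x} ≤ ENNReal.ofReal (x / m)) :
    μ {ω : Ω | ∑ j, D j ω ≤ t} ≤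
        ENNReal.ofReal ((q.choose (q / 2) : ℝ) * (2 * t / (q * m)) ^ (q / 2)) ∧
      (q.choose (q / 2) : ℝ) * (2 * t / (q * m)) ^ (q / 2) ≤
        (4 * Real.exp 1 * t / (q * m)) ^ (q / 2) := by
  obtain ⟨k, hk⟩ := hqe
  have hq2 : q / 2 = k := by omega
  have hk0 : 0 < k := by omega
  have hqR : (0:ℝ) < q := by exact_mod_cast hq
  set c : ℝ := 2 * t / q with hc_def
  have hc : 0 < c := by positivity
  have hcm : c / m = 2 * t / (q * m) := by rw [hc_def, div_div]
  constructor
  · -- main bound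
    have hsub : {ω : Ω | ∑ j, D j ω ≤ t} ⊆
        ⋃ S ∈ Finset.powersetCard (q/2) (Finset.univ : Finset (Fin q)),
          ⋂ j ∈ S, {ω : Ω | D j ω ≤ c} := by
      intro ω hω
      simp only [Set.mem_setOf_eq] at hω
      set T := Finset.univ.filter (fun j => D j ω ≤ c) with hT
      have hTcard : q / 2 ≤ T.card := by
        by_contra h
        push_neg at h
        set U := Finset.univ.filter (fun j => ¬ D j ω ≤ c) with hU
        have hcards := Finset.card_filter_add_card_filter_not
          (s := (Finset.univ : Finset (Fin q))) (p := fun j => D j ω ≤ c)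
        rw [Finset.card_univ, Fintype.card_fin] at hcards
        have hUcard : q / 2 + 1 ≤ U.card := by
          rw [hU]; rw [hT] at h; omega
        have hUne : U.Nonempty := Finset.card_pos.mp (by omega)
        have h1 : ∑ _j ∈ U, c < ∑ j ∈ U, D j ω :=
          Finset.sum_lt_sum_of_nonempty hUne (fun j hj => by
            have := (Finset.mem_filter.mp hj).2
            exact lt_of_not_ge this)
        have h2 : ∑ j ∈ U, D j ω ≤ ∑ j, D j ω :=
          Finset.sum_le_sum_of_subset_of_nonneg (Finset.subset_univ U)
            (fun j _ _ => (hpos j ω).le)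
        rw [Finset.sum_const, nsmul_eq_mul] at h1
        have h3 : t ≤ (U.card : ℝ) * c := by
          have hle : ((q/2 : ℕ) : ℝ) * c ≤ (U.card : ℝ) * c := by
            apply mul_le_mul_of_nonneg_right _ hc.le
            exact_mod_cast Nat.le_of_succ_le hUcard
          have heq : ((q/2 : ℕ) : ℝ) * c = t := by
            rw [hq2, hc_def]
            have hqk : (q:ℝ) = 2*(k:ℝ) := by
              have : q = 2 * k := by omega
              exact_mod_cast this
            rw [hqk]
            have : (k:ℝ) ≠ 0 := by exact_mod_cast hk0.ne'
            field_simp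
          linarith
        linarith
      obtain ⟨S, hST, hScard⟩ := Finset.exists_subset_card_eq hTcard
      refine Set.mem_biUnion (x := S) (Finset.mem_powersetCard.mpr ⟨Finset.subset_univ S, hScard⟩) ?_
      refine Set.mem_iInter₂.mpr (fun j hj => ?_)
      exact (Finset.mem_filter.mp (hST hj)).2
    have hmain : ∀ S ∈ Finset.powersetCard (q/2) (Finset.univ : Finset (Fin q)),
        μ (⋂ j ∈ S, {ω : Ω | D j ω ≤ c}) ≤ ENNReal.ofReal ((c/m) ^ (q/2)) := by
      intro S hS
      have hScard : S.card = q/2 := (Finset.mem_powersetCard.mp hS).2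
      have hind := hindep.measure_inter_preimage_eq_mul S
        (sets := fun _ => Set.Iic c) (fun i _ => measurableSet_Iic)
      have heq : (⋂ j ∈ S, {ω : Ω | D j ω ≤ c}) = ⋂ j ∈ S, D j ⁻¹' Set.Iic c := rfl
      rw [heq, hind]
      calc ∏ j ∈ S, μ (D j ⁻¹' Set.Iic c)
          ≤ ∏ _j ∈ S, ENNReal.ofReal (c / m) :=
            Finset.prod_le_prod' (fun j _ => hcdf c hc j)
        _ = ENNReal.ofReal (c / m) ^ S.card := Finset.prod_const _
        _ = ENNReal.ofReal ((c/m) ^ (q/2)) := by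
            rw [hScard, ENNReal.ofReal_pow (by positivity)]
    calc μ {ω : Ω | ∑ j, D j ω ≤ t}
        ≤ μ (⋃ S ∈ Finset.powersetCard (q/2) (Finset.univ : Finset (Fin q)),
            ⋂ j ∈ S, {ω : Ω | D j ω ≤ c}) := measure_mono hsub
      _ ≤ ∑ S ∈ Finset.powersetCard (q/2) (Finset.univ : Finset (Fin q)),
            μ (⋂ j ∈ S, {ω : Ω | D j ω ≤ c}) := measure_biUnion_finset_le _ _
      _ ≤ ∑ _S ∈ Finset.powersetCard (q/2) (Finset.univ : Finset (Fin q)),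
            ENNReal.ofReal ((c/m) ^ (q/2)) := Finset.sum_le_sum hmain
      _ = (q.choose (q/2)) • ENNReal.ofReal ((c/m) ^ (q/2)) := by
            rw [Finset.sum_const, Finset.card_powersetCard, Finset.card_univ,
              Fintype.card_fin]
      _ = ENNReal.ofReal ((q.choose (q / 2) : ℝ) * (2 * t / (q * m)) ^ (q / 2)) := by
            rw [nsmul_eq_mul, ← ENNReal.ofReal_natCast (q.choose (q/2)),
              ← ENNReal.ofReal_mul (by positivity), hcm]
  · -- second inequality
    have hchoose : (q.choose (q/2) : ℝ) ≤ 4 ^ (q/2) := by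
      have h1 : q.choose (q/2) ≤ 2 ^ q := by
        have := Finset.single_le_sum (f := fun i => q.choose i)
          (fun i _ => Nat.zero_le _) (Finset.mem_range.mpr (show q/2 < q+1 by omega))
        rw [Nat.sum_range_choose q] at this
        exact this
      have h2 : (2:ℕ) ^ q = 4 ^ (q/2) := by
        rw [hq2]
        have : q = 2 * k := by omega
        rw [this, pow_mul]
        norm_num
      have h3 : q.choose (q/2) ≤ 4 ^ (q/2) := h2 ▸ h1
      exact_mod_cast h3
    set a : ℝ := 2 * t / (q * m) with ha_def
    have ha : 0 < a := by positivity
    have he : (4:ℝ) ≤ 2 * Real.exp 1 := by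
      have := Real.add_one_le_exp (1:ℝ)
      linarith
    calc (q.choose (q / 2) : ℝ) * a ^ (q / 2)
        ≤ 4 ^ (q/2) * a ^ (q/2) :=
          mul_le_mul_of_nonneg_right hchoose (by positivity)
      _ = (4 * a) ^ (q/2) := (mul_pow _ _ _).symm
      _ ≤ (2 * Real.exp 1 * a) ^ (q/2) := by
          apply pow_le_pow_left₀ (by positivity)
          exact mul_le_mul_of_nonneg_right he ha.le
      _ = (4 * Real.exp 1 * t / (q * m)) ^ (q / 2) := by
          rw [ha_def]; ring_nf
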